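/- Let G be a locally compact second countable unimodular group, A a closed unimodular subgroup, λ, λ_A their Haar measures, and λ_Q the invariant measure on G/A with the standard Weil disintegration. Let B ⊆ G be compact and let (F_n) be a sequence of measurable symmetric subsets of A with 0 < λ_A(F_n) < ∞ which are ((B⁻¹B ∩ A), ε_n)-invariant with ε_n → 0, meaning λ_A((B⁻¹B ∩ A)F_n) ≤ (1 + ε_n)λ_A(F_n). Then λ(BF_n)/λ_A(F_n) → λ_Q(BA) as n → ∞. -/

import Mathlib

open MeasureTheory ENNReal Filter Pointwise



lemma aux_closure_one_subset {G : Type*} [Group G] [TopologicalSpace G] [IsTopologicalGroup G]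
    {V : Set G} (hV : V ∈ nhds 1) : closure ({1} : Set G) ⊆ V := by
  intro z hz
  set W : Set G := (fun y : G => y⁻¹) ⁻¹' interior V with hWdef
  have hWo : IsOpen W := isOpen_interior.preimage continuous_inv
  have hW1 : (1 : G) ∈ W := by
    simp only [hWdef, Set.mem_preimage, inv_one]
    exact mem_interior_iff_mem_nhds.2 hV
  have hzW : z ∈ z • W := ⟨1, hW1, mul_one z⟩
  obtain ⟨y, hyO, hy1⟩ := mem_closure_iff.1 hz (z • W) (hWo.smul z) hzW
  have hy : y = 1 := hy1
  subst hy
  obtain ⟨w, hw, hwz⟩ := hyO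
  have hwz' : z * w = 1 := hwz
  have : w = z⁻¹ := eq_inv_of_mul_eq_one_right hwz'
  subst this
  have : z ∈ interior V := by simpa [hWdef] using hw
  exact interior_subset this

lemma aux_nsat {G : Type*} [Group G] [TopologicalSpace G] [IsTopologicalGroup G]
    [MeasurableSpace G] [BorelSpace G] {S : Set G} (hS : MeasurableSet S) :
    closure ({1} : Set G) * S = S := by
  have hNinv : ∀ n : G, n ∈ closure ({1} : Set G) → n⁻¹ ∈ closure ({1} : Set G) := by
    intro n hn
    have h1 : n⁻¹ ∈ (closure ({1} : Set G))⁻¹ := by simpa using hn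
    rw [inv_closure] at h1; simpa using h1
  have h1N : (1 : G) ∈ closure ({1} : Set G) := subset_closure rfl
  revert hS
  apply MeasurableSet.induction_on_open (C := fun S _ => closure ({1} : Set G) * S = S)
  · intro U hU
    apply Set.Subset.antisymm
    · rintro x ⟨n, hn, u, hu, rfl⟩
      have hO : (fun y : G => y * u) ⁻¹' U ∈ nhds (1 : G) := by
        refine (hU.preimage (continuous_mul_right u)).mem_nhds ?_
        simpa using hu
      exact aux_closure_one_subset hO hn
    · intro s hs
      exact ⟨1, h1N, s, hs, one_mul s⟩
  · intro t _ ht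
    apply Set.Subset.antisymm
    · rintro x ⟨n, hn, u, hu, rfl⟩
      intro hmem
      have : u ∈ closure ({1} : Set G) * t := ⟨n⁻¹, hNinv n hn, n * u, hmem, by group⟩
      rw [ht] at this
      exact hu this
    · intro s hs
      exact ⟨1, h1N, s, hs, one_mul s⟩
  · intro f _ _ hf
    apply Set.Subset.antisymm
    · rintro x ⟨n, hn, u, hu, rfl⟩
      obtain ⟨i, hi⟩ := Set.mem_iUnion.1 hu
      have : n * u ∈ closure ({1} : Set G) * f i := ⟨n, hn, u, hi, rfl⟩
      rw [hf i] at this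
      exact Set.mem_iUnion.2 ⟨i, this⟩
    · intro s hs
      exact ⟨1, h1N, s, hs, one_mul s⟩


lemma aux_sel {G : Type*} [Group G] [TopologicalSpace G] [IsTopologicalGroup G]
    [SecondCountableTopology G] [LocallyCompactSpace G] [MeasurableSpace G] [BorelSpace G]
    (A : Subgroup G) (hA : IsClosed (A : Set G)) (B : Set G) (hB : IsCompact B) :
    ∃ β : G ⧸ A → G, Measurable β ∧ ∀ q ∈ (QuotientGroup.mk '' B : Set (G ⧸ A)),
      β q ∈ closure B ∧ QuotientGroup.mk (β q) = q := by
  classical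
  obtain ⟨e, he⟩ : ∃ e : ℕ → Set G, (nhds (1:G)).HasAntitoneBasis e :=
    (nhds (1:G)).exists_antitone_basis
  obtain ⟨K₀, hK₀c, hK₀n⟩ := exists_compact_mem_nhds (1:G)
  -- small closed compact "balls"
  have hDex : ∀ k : ℕ, ∃ D : Set G, IsCompact D ∧ IsClosed D ∧ D ∈ nhds (1:G) ∧
      D⁻¹ * D ⊆ e k := by
    intro k
    have hek : e k ∈ nhds (1:G) := he.mem k
    obtain ⟨V₁, hV₁o, hV₁1, hV₁⟩ := exists_open_nhds_one_mul_subset hek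
    obtain ⟨V₂, hV₂o, hV₂1, hV₂⟩ := exists_open_nhds_one_mul_subset (hV₁o.mem_nhds hV₁1)
    set W : Set G := (V₂ ∩ V₂⁻¹) ∩ (interior K₀ ∩ (interior K₀)⁻¹) with hWdef
    have hWo : IsOpen W :=
      IsOpen.inter (hV₂o.inter hV₂o.inv) (isOpen_interior.inter isOpen_interior.inv)
    have hW1 : (1:G) ∈ W := by
      have h1K : (1:G) ∈ interior K₀ := mem_interior_iff_mem_nhds.2 hK₀n
      simp [hWdef, hV₂1, h1K]
    have hWsym : W⁻¹ = W := by
      rw [hWdef]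
      ext x
      simp only [Set.inter_inv, inv_inv, Set.mem_inter_iff]
      tauto
    have hclW : closure W ⊆ W * W := by
      intro z hz
      have hzW : z ∈ z • W := ⟨1, hW1, mul_one z⟩
      obtain ⟨y, hyO, hyW⟩ := mem_closure_iff.1 hz (z • W) (hWo.smul z) hzW
      obtain ⟨w, hw, rfl⟩ := hyO
      have hwinv : w⁻¹ ∈ W := by rw [← hWsym]; exact Set.inv_mem_inv.2 hw
      have hzz : z = (z • w) * w⁻¹ := by simp [smul_eq_mul]
      rw [hzz]; exact Set.mul_mem_mul hyW hwinv
    have hWK : W ⊆ interior K₀ := fun x hx => hx.2.1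
    have hWV₂ : W ⊆ V₂ := fun x hx => hx.1.1
    have hWWV₁ : W * W ⊆ V₁ := (Set.mul_subset_mul hWV₂ hWV₂).trans hV₂
    refine ⟨closure W, ?_, isClosed_closure, ?_, ?_⟩
    · refine IsCompact.of_isClosed_subset (hK₀c.mul hK₀c) isClosed_closure ?_
      refine hclW.trans (Set.mul_subset_mul ?_ ?_) <;> exact hWK.trans interior_subset
    · exact mem_nhds_iff.2 ⟨W, subset_closure, hWo, hW1⟩
    · calc (closure W)⁻¹ * closure W ⊆ (W * W)⁻¹ * (W * W) :=
            Set.mul_subset_mul (Set.inv_subset_inv.2 hclW) hclW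
        _ = (W * W) * (W * W) := by rw [mul_inv_rev, hWsym]
        _ ⊆ V₁ * V₁ := Set.mul_subset_mul hWWV₁ hWWV₁
        _ ⊆ e k := hV₁
  choose D hDc hDcl hDn hDe using hDex
  -- finite covers of B by translates of the D k
  have hcovex : ∀ k : ℕ, ∃ L : List G,
      B ⊆ ⋃ j ∈ Finset.range L.length, (L.getD j 1) • D k := by
    intro k
    obtain ⟨t, -, ht⟩ := hB.elim_nhds_subcover  (fun x => x • D k) (fun x _ => by
      have : (fun y => x⁻¹ * y) ⁻¹' D k ∈ nhds x := by
        apply ContinuousAt.preimage_mem_nhds (continuous_mul_left x⁻¹).continuousAt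
        simpa using hDn k
      convert this using 1
      ext y; simp [Set.mem_smul_set_iff_inv_smul_mem, smul_eq_mul])
    refine ⟨t.toList, ?_⟩
    intro z hz
    obtain ⟨x, hxt, hzx⟩ := Set.mem_iUnion₂.1 (ht hz)
    have hxl : x ∈ t.toList := Finset.mem_toList.2 hxt
    obtain ⟨j, hj, hxj⟩ := List.mem_iff_getElem.1 hxl
    refine Set.mem_iUnion₂.2 ⟨j, Finset.mem_range.2 hj, ?_⟩
    rw [List.getD_eq_getElem t.toList 1 hj, hxj]
    exact hzx
  choose Lk hLk using hcovex
  set m : ℕ → ℕ := fun k => (Lk k).length with hmdef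
  set P : ℕ → ℕ → Set G := fun k j => ((Lk k).getD j 1) • D k with hPdef
  have hPcl : ∀ k j, IsClosed (P k j) := fun k j => (hDcl k).smul _
  have hPcp : ∀ k j, IsCompact (P k j) := fun k j => (hDc k).smul _
  have hcovP : ∀ k, closure B ⊆ ⋃ j ∈ Finset.range (m k), P k j := by
    intro k
    refine closure_minimal (hLk k) ?_
    exact Set.Finite.isClosed_biUnion (Finset.range (m k)).finite_toSet
      (fun j _ => hPcl k j)
  set π : G → G ⧸ A := fun x => QuotientGroup.mk x with hπdef
  set fib : G ⧸ A → Set G := fun q => {x | π x = q} with hfibdef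
  have hfibcl : ∀ q, IsClosed (fib q) := by
    intro q
    obtain ⟨g, rfl⟩ := Quotient.exists_rep q
    have : fib (Quotient.mk _ g) = g • (A : Set G) := by
      ext x
      simp only [hfibdef, Set.mem_setOf_eq, Set.mem_smul_set_iff_inv_smul_mem, smul_eq_mul]
      constructor
      · intro h
        exact QuotientGroup.eq.1 h.symm
      · intro h
        exact (QuotientGroup.eq.2 h).symm
    rw [this]
    exact hA.smul g
  -- measurability of hitting sets
  have hW : ∀ X : Set G, IsCompact X →
      MeasurableSet {q : G ⧸ A | (X ∩ fib q).Nonempty} := by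
    intro X hX
    rw [measurableSet_quotient]
    have hpre : (Quotient.mk'' ⁻¹' {q : G ⧸ A | (X ∩ fib q).Nonempty} : Set G)
        = X * (A : Set G) := by
      ext y
      simp only [Set.mem_preimage, Set.mem_setOf_eq]
      constructor
      · rintro ⟨x, hxX, hxf⟩
        have hxy : (QuotientGroup.mk x : G ⧸ A) = QuotientGroup.mk y := hxf
        refine ⟨x, hxX, x⁻¹ * y, QuotientGroup.eq.1 hxy, by group⟩
      · rintro ⟨x, hxX, a, haA, rfl⟩
        exact ⟨x, hxX, (QuotientGroup.mk_mul_of_mem x haA).symm⟩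
    rw [hpre]
    exact (hA.mul_left_of_isCompact hX).measurableSet
  -- index choice function
  set jj : (G ⧸ A) → ℕ → Set G → ℕ := fun q k v =>
    if h : ∃ j, j < m k ∧ ((v ∩ P k j) ∩ fib q).Nonempty then Nat.find h else 0 with hjjdef
  -- the refining recursion
  set T : (G ⧸ A) → ℕ → Set G := fun q k =>
    Nat.rec (closure B) (fun k ih => ih ∩ P k (jj q k ih)) k with hTdef
  have hT0 : ∀ q, T q 0 = closure B := fun q => rfl
  have hTsucc : ∀ q k, T q (k+1) = T q k ∩ P k (jj q k (T q k)) := fun q k => rfl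
  have hTmono : ∀ q k, T q (k+1) ⊆ T q k := by
    intro q k; rw [hTsucc]; exact Set.inter_subset_left
  have hTcl : ∀ q k, IsClosed (T q k) := by
    intro q k
    induction k with
    | zero => exact isClosed_closure
    | succ k ih => rw [hTsucc]; exact ih.inter (hPcl _ _)
  have hTsub0 : ∀ q k, T q k ⊆ closure B := by
    intro q k
    induction k with
    | zero => exact subset_rfl
    | succ k ih => exact (hTmono q k).trans ih
  have hTP : ∀ q k, T q (k+1) ⊆ P k (jj q k (T q k)) := by
    intro q k; rw [hTsucc]; exact Set.inter_subset_right
  -- nonemptiness invariant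
  have key : ∀ q, (closure B ∩ fib q).Nonempty → ∀ k, (T q k ∩ fib q).Nonempty := by
    intro q h0 k
    induction k with
    | zero => exact h0
    | succ k ih =>
      obtain ⟨z, hzT, hzf⟩ := ih
      have hzB : z ∈ closure B := hTsub0 q k hzT
      obtain ⟨j, hjr, hzP⟩ := Set.mem_iUnion₂.1 (hcovP k hzB)
      have hex : ∃ j, j < m k ∧ ((T q k ∩ P k j) ∩ fib q).Nonempty :=
        ⟨j, Finset.mem_range.1 hjr, ⟨z, ⟨hzT, hzP⟩, hzf⟩⟩
      rw [hTsucc]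
      simp only [hjjdef]
      rw [dif_pos hex]
      exact (Nat.find_spec hex).2
  -- each stage (from 1 on) is compact
  have hTcp : ∀ q k, IsCompact (T q (k+1)) := by
    intro q k
    exact IsCompact.of_isClosed_subset (hPcp k _) (hTcl q (k+1)) (hTP q k)
  -- finite range and measurability of level sets
  have hlevel : ∀ k : ℕ, (Set.range fun q => T q k).Finite ∧
      ∀ v : Set G, MeasurableSet {q | T q k = v} := by
    have hjjm : ∀ (w : Set G), IsClosed w → ∀ k j, MeasurableSet {q | jj q k w = j} := by
      intro w hw k j
      set N : ℕ → Set (G ⧸ A) := fun i => {q | ((w ∩ P k i) ∩ fib q).Nonempty} with hNdef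
      have hN : ∀ i, MeasurableSet (N i) := by
        intro i
        exact hW _ ((hPcp k i).inter_left hw)
      have hEq : {q | jj q k w = j} =
          (({q : G ⧸ A | j < m k} ∩ N j) ∩
            (⋂ i ∈ Finset.range j, (({q : G ⧸ A | i < m k} ∩ N i)ᶜ))) ∪
          ((⋃ i ∈ Finset.range (m k), N i)ᶜ ∩ {q : G ⧸ A | j = 0}) := by
        ext q
        simp only [Set.mem_setOf_eq, Set.mem_union, Set.mem_inter_iff, Set.mem_iInter,
          Set.mem_compl_iff, Set.mem_iUnion, Finset.mem_range, exists_prop, hjjdef]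
        by_cases h : ∃ i, i < m k ∧ ((w ∩ P k i) ∩ fib q).Nonempty
        · rw [dif_pos h, Nat.find_eq_iff h]
          constructor
          · rintro ⟨⟨hjm, hjN⟩, hmin⟩
            refine Or.inl ⟨⟨hjm, hjN⟩, ?_⟩
            intro i hij ⟨him, hiN⟩
            exact hmin i hij ⟨him, hiN⟩
          · rintro (⟨⟨hjm, hjN⟩, hmin⟩ | ⟨hno, -⟩)
            · refine ⟨⟨hjm, hjN⟩, ?_⟩
              intro i hij hcontra
              exact hmin i hij ⟨hcontra.1, hcontra.2⟩
            · obtain ⟨i, him, hiN⟩ := h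
              exact absurd ⟨i, him, hiN⟩ hno
        · rw [dif_neg h]
          constructor
          · intro h0
            refine Or.inr ⟨?_, h0.symm⟩
            rintro ⟨i, him, hiN⟩
            exact h ⟨i, him, hiN⟩
          · rintro (⟨⟨hjm, hjN⟩, -⟩ | ⟨-, hj0⟩)
            · exact absurd ⟨j, hjm, hjN⟩ h
            · exact hj0.symm
      rw [hEq]
      have hconst : ∀ p : Prop, MeasurableSet {q : G ⧸ A | p} := by
        intro p
        by_cases hp : p
        · simp only [hp, Set.setOf_true]; exact MeasurableSet.univ
        · simp only [hp, Set.setOf_false]; exact MeasurableSet.empty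
      refine MeasurableSet.union ?_ ?_
      · refine MeasurableSet.inter ((hconst _).inter (hN j)) ?_
        refine MeasurableSet.biInter (Finset.range j).countable_toSet ?_
        intro i _
        exact ((hconst _).inter (hN i)).compl
      · refine MeasurableSet.inter ?_ (hconst _)
        exact (MeasurableSet.biUnion (Finset.range (m k)).countable_toSet
          (fun i _ => hN i)).compl
    intro k
    induction k with
    | zero =>
      constructor
      · refine (Set.finite_singleton (closure B)).subset ?_
        rintro _ ⟨q, rfl⟩; exact rfl
      · intro v
        by_cases h : closure B = v
        · have : {q : G ⧸ A | T q 0 = v} = Set.univ := by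
            ext q; simp [hT0, h]
          rw [this]; exact MeasurableSet.univ
        · have : {q : G ⧸ A | T q 0 = v} = ∅ := by
            ext q; simp [hT0, h]
          rw [this]; exact MeasurableSet.empty
    | succ k ih =>
      obtain ⟨hfin, hmeas⟩ := ih
      have hrange : (Set.range fun q => T q (k+1)) ⊆
          Set.image2 (fun (w : Set G) (j : ℕ) => w ∩ P k j)
            (Set.range fun q => T q k) (Set.Iio (m k + 1)) := by
        rintro _ ⟨q, rfl⟩
        show T q (k+1) ∈ _
        rw [hTsucc]
        refine ⟨T q k, ⟨q, rfl⟩, jj q k (T q k), ?_, rfl⟩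
        simp only [Set.mem_Iio, hjjdef]
        by_cases h : ∃ j, j < m k ∧ ((T q k ∩ P k j) ∩ fib q).Nonempty
        · rw [dif_pos h]
          exact lt_of_lt_of_le (Nat.find_spec h).1 (Nat.le_succ _)
        · rw [dif_neg h]
          exact Nat.succ_pos _
      constructor
      · exact (hfin.image2 _ (Set.finite_Iio _)).subset hrange
      · intro v
        have hEq : {q | T q (k+1) = v} =
            ⋃ (w : Set G) (_ : w ∈ Set.range fun q => T q k) (j : ℕ)
              (_ : j ∈ Finset.range (m k + 1)) (_ : w ∩ P k j = v),
              ({q | T q k = w} ∩ {q | jj q k w = j}) := by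
          ext q
          simp only [Set.mem_setOf_eq, Set.mem_iUnion, Set.mem_inter_iff, exists_prop]
          constructor
          · intro hv
            refine ⟨T q k, ⟨q, rfl⟩, jj q k (T q k), ?_, ?_, rfl, rfl⟩
            · simp only [Finset.mem_range, hjjdef]
              by_cases h : ∃ j, j < m k ∧ ((T q k ∩ P k j) ∩ fib q).Nonempty
              · rw [dif_pos h]
                exact lt_of_lt_of_le (Nat.find_spec h).1 (Nat.le_succ _)
              · rw [dif_neg h]
                exact Nat.succ_pos _
            · rw [← hv, hTsucc]
          · rintro ⟨w, -, j, -, hv, hTw, hjjw⟩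
            rw [hTsucc, hTw, hjjw, hv]
        rw [hEq]
        refine MeasurableSet.biUnion hfin.countable ?_
        intro w hwr
        refine MeasurableSet.biUnion (Finset.range (m k + 1)).countable_toSet ?_
        intro j _
        refine MeasurableSet.iUnion fun _ => ?_
        obtain ⟨q₀, rfl⟩ := hwr
        exact (hmeas _).inter (hjjm _ (hTcl q₀ k) k j)
  -- Cantor intersection
  have hIne : ∀ q, (∀ k, (T q (k+1) ∩ fib q).Nonempty) →
      (⋂ k, T q (k+1) ∩ fib q).Nonempty := by
    intro q hne
    apply IsCompact.nonempty_iInter_of_sequence_nonempty_isCompact_isClosed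
    · intro i
      exact Set.inter_subset_inter_left _ (hTmono q (i+1))
    · exact hne
    · exact ((hTcp q 0).inter_right (hfibcl q))
    · intro i
      exact (hTcl q (i+1)).inter (hfibcl q)
  set NE : Set (G ⧸ A) := {q | (⋂ k, T q (k+1) ∩ fib q).Nonempty} with hNEdef
  have hNEiff : ∀ q, q ∈ NE ↔ ∀ k, (T q (k+1) ∩ fib q).Nonempty := by
    intro q
    constructor
    · intro h k
      obtain ⟨x, hx⟩ := h
      exact ⟨x, Set.mem_iInter.1 hx k⟩
    · exact hIne q
  -- the selection
  set β : G ⧸ A → G := fun q =>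
    if h : (⋂ k, T q (k+1) ∩ fib q).Nonempty then h.some else 1 with hβdef
  have hβmem : ∀ q, q ∈ NE → ∀ k, β q ∈ T q (k+1) ∩ fib q := by
    intro q h k
    have h' : (⋂ k, T q (k+1) ∩ fib q).Nonempty := h
    simp only [hβdef]
    rw [dif_pos h']
    exact Set.mem_iInter.1 h'.some_mem k
  -- measurability helpers
  have hstage : ∀ k, MeasurableSet {q : G ⧸ A | (T q (k+1) ∩ fib q).Nonempty} := by
    intro k
    have hEq : {q : G ⧸ A | (T q (k+1) ∩ fib q).Nonempty} =
        ⋃ (w : Set G) (_ : w ∈ Set.range fun q => T q (k+1)),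
          ({q | T q (k+1) = w} ∩ {q | (w ∩ fib q).Nonempty}) := by
      ext q
      simp only [Set.mem_setOf_eq, Set.mem_iUnion, Set.mem_inter_iff, exists_prop]
      constructor
      · intro h
        exact ⟨T q (k+1), ⟨q, rfl⟩, rfl, h⟩
      · rintro ⟨w, -, hw, hne⟩
        rw [hw]; exact hne
    rw [hEq]
    refine MeasurableSet.biUnion (hlevel (k+1)).1.countable ?_
    rintro w ⟨q₀, rfl⟩
    exact ((hlevel (k+1)).2 _).inter (hW _ (hTcp q₀ k))
  have hNEm : MeasurableSet NE := by
    have : NE = ⋂ k, {q : G ⧸ A | (T q (k+1) ∩ fib q).Nonempty} := by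
      ext q
      simp only [Set.mem_iInter, Set.mem_setOf_eq]
      exact hNEiff q
    rw [this]
    exact MeasurableSet.iInter fun k => hstage k
  have hTUm : ∀ (k : ℕ) (U : Set G), MeasurableSet {q : G ⧸ A | T q (k+1) ⊆ U} := by
    intro k U
    have hEq : {q : G ⧸ A | T q (k+1) ⊆ U} =
        ⋃ (w : Set G) (_ : w ∈ Set.range fun q => T q (k+1)) (_ : w ⊆ U),
          {q | T q (k+1) = w} := by
      ext q
      simp only [Set.mem_setOf_eq, Set.mem_iUnion, exists_prop]
      constructor
      · intro h
        exact ⟨T q (k+1), ⟨q, rfl⟩, h, rfl⟩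
      · rintro ⟨w, -, hwU, hw⟩
        rw [hw]; exact hwU
    rw [hEq]
    refine MeasurableSet.biUnion (hlevel (k+1)).1.countable ?_
    intro w _
    exact MeasurableSet.iUnion fun _ => (hlevel (k+1)).2 _
  -- key separation property
  have hsep : ∀ q, q ∈ NE → ∀ U : Set G, IsOpen U → β q ∈ U → ∃ k, T q (k+1) ⊆ U := by
    intro q hq U hU hβU
    have hWnh : (fun y => β q * y) ⁻¹' U ∈ nhds (1 : G) := by
      refine (hU.preimage (continuous_mul_left (β q))).mem_nhds ?_
      simpa using hβU
    obtain ⟨k, -, hk⟩ := he.toHasBasis.mem_iff.1 hWnh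
    refine ⟨k, ?_⟩
    intro y hy
    have hβP : β q ∈ P k (jj q k (T q k)) := hTP q k (hβmem q hq k).1
    have hyP : y ∈ P k (jj q k (T q k)) := hTP q k hy
    simp only [hPdef] at hβP hyP
    obtain ⟨d₂, hd₂, hβeq⟩ := hβP
    obtain ⟨d₁, hd₁, hyeq⟩ := hyP
    have : (β q)⁻¹ * y ∈ (D k)⁻¹ * D k := by
      rw [← hβeq, ← hyeq]
      simp only [smul_eq_mul]
      refine ⟨d₂⁻¹, Set.inv_mem_inv.2 hd₂, d₁, hd₁, by group⟩
    have hmem : (β q)⁻¹ * y ∈ (fun y => β q * y) ⁻¹' U := hk (hDe k this)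
    simpa using hmem
  refine ⟨β, ?_, ?_⟩
  · -- measurability of β
    apply measurable_of_isOpen
    intro U hU
    have hset : β ⁻¹' U =
        (NE ∩ ⋃ k, {q : G ⧸ A | T q (k+1) ⊆ U}) ∪
        (NEᶜ ∩ {q : G ⧸ A | (1:G) ∈ U}) := by
      ext q
      simp only [Set.mem_preimage, Set.mem_union, Set.mem_inter_iff, Set.mem_iUnion,
        Set.mem_compl_iff, Set.mem_setOf_eq]
      constructor
      · intro hq
        by_cases h : q ∈ NE
        · exact Or.inl ⟨h, hsep q h U hU hq⟩
        · refine Or.inr ⟨h, ?_⟩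
          have h' : ¬ (⋂ k, T q (k+1) ∩ fib q).Nonempty := h
          have : β q = 1 := by
            simp only [hβdef]
            rw [dif_neg h']
          rwa [this] at hq
      · rintro (⟨h, k, hk⟩ | ⟨h, h1⟩)
        · exact hk (hβmem q h k).1
        · have h' : ¬ (⋂ k, T q (k+1) ∩ fib q).Nonempty := h
          have : β q = 1 := by
            simp only [hβdef]
            rw [dif_neg h']
          rw [this]; exact h1
    rw [hset]
    refine MeasurableSet.union (hNEm.inter (MeasurableSet.iUnion fun k => hTUm k U)) ?_
    refine hNEm.compl.inter ?_
    by_cases h1 : (1:G) ∈ U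
    · simp only [h1, Set.setOf_true]; exact MeasurableSet.univ
    · simp only [h1, Set.setOf_false]; exact MeasurableSet.empty
  · -- behaviour on the image of B
    rintro q ⟨b, hbB, rfl⟩
    have h0 : (closure B ∩ fib (QuotientGroup.mk b)).Nonempty :=
      ⟨b, subset_closure hbB, rfl⟩
    have hne : QuotientGroup.mk b ∈ NE := by
      rw [hNEiff]
      intro k
      exact key _ h0 (k+1)
    have h1 := hβmem _ hne 0
    exact ⟨hTsub0 _ 1 h1.1, h1.2⟩



/-- Let `G` be a (locally compact second countable unimodular) group
with Haar measure `lam`, `A` a closed unimodular subgroup with Haar measure `lamA`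
(viewed as a measure on `G` supported on `A`), and `lamQ` the invariant measure on
`G/A` with the Weil disintegration `λ(E) = ∫_{G/A} λ_{gA}(E) dλ_Q(gA)`, where
`λ_{gA} = (g·)_* λ_A`.  Let `B ⊆ G` be compact and `(F_n)` symmetric Følner-type subsets
of `A` of positive finite measure which are `((B⁻¹B ∩ A), ε_n)`-invariant, i.e.
`λ_A((B⁻¹B ∩ A)F_n) ≤ (1 + ε_n) λ_A(F_n)`, with `ε_n → 0`.  Then
`λ(BF_n)/λ_A(F_n) → λ_Q(BA)`. -/
theorem stmt15 {G : Type*} [Group G] [TopologicalSpace G] [IsTopologicalGroup G]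
    [SecondCountableTopology G] [LocallyCompactSpace G]
    [MeasurableSpace G] [BorelSpace G]
    (lam : Measure G)
    (hlaml : ∀ g : G, MeasurePreserving (fun x => g * x) lam lam)
    (hlamr : ∀ g : G, MeasurePreserving (fun x => x * g) lam lam)
    (A : Subgroup G) (hAclosed : IsClosed (A : Set G))
    (lamA : Measure G)
    (hsupp : ∀ E : Set G, MeasurableSet E → E ∩ (A : Set G) = ∅ → lamA E = 0)
    (hlamAl : ∀ a ∈ A, ∀ E : Set G, lamA ((fun x => a * x) ⁻¹' E) = lamA E)
    (hlamAr : ∀ a ∈ A, ∀ E : Set G, lamA ((fun x => x * a) ⁻¹' E) = lamA E)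
    (lamQ : Measure (G ⧸ A)) (c : G ⧸ A → Measure G)
    (hc : ∀ g : G, c (QuotientGroup.mk g) = Measure.map (fun x => g * x) lamA)
    (hWeil : ∀ E : Set G, MeasurableSet E → lam E = ∫⁻ q, c q E ∂lamQ)
    (B : Set G) (hB : IsCompact B)
    (F : ℕ → Set G) (hFA : ∀ n, F n ⊆ (A : Set G)) (hFmeas : ∀ n, MeasurableSet (F n))
    (hFsymm : ∀ n, (F n)⁻¹ = F n)
    (hF0 : ∀ n, 0 < lamA (F n)) (hFfin : ∀ n, lamA (F n) < ⊤)
    (ε : ℕ → ℝ) (hε0 : ∀ n, 0 ≤ ε n) (hε : Tendsto ε atTop (nhds 0))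
    (hFolner : ∀ n,
      lamA ((B⁻¹ * B ∩ (A : Set G)) * F n) ≤ (1 + ENNReal.ofReal (ε n)) * lamA (F n)) :
    Tendsto (fun n => lam (B * F n) / lamA (F n)) atTop
      (nhds (lamQ (QuotientGroup.mk '' B))) := by
  classical
  rcases B.eq_empty_or_nonempty with rfl | hBne
  · simpa [Set.empty_mul, ENNReal.zero_div] using
      (tendsto_const_nhds : Tendsto (fun _ : ℕ => (0:ℝ≥0∞)) atTop (nhds 0))
  obtain ⟨β, hβm, hβ⟩ := aux_sel A hAclosed B hB
  set QB : Set (G ⧸ A) := QuotientGroup.mk '' B with hQBdef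
  have hQBm : MeasurableSet QB := by
    rw [measurableSet_quotient]
    have hpre : (Quotient.mk'' ⁻¹' QB : Set G) = B * (A : Set G) := by
      ext y
      simp only [Set.mem_preimage, hQBdef, Set.mem_image]
      constructor
      · rintro ⟨x, hxX, hxf⟩
        have hxy : (QuotientGroup.mk x : G ⧸ A) = QuotientGroup.mk y := hxf
        exact ⟨x, hxX, x⁻¹ * y, QuotientGroup.eq.1 hxy, by group⟩
      · rintro ⟨x, hxX, a, haA, rfl⟩
        exact ⟨x, hxX, (QuotientGroup.mk_mul_of_mem x haA).symm⟩
    rw [hpre]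
    exact (hAclosed.mul_left_of_isCompact hB).measurableSet
  set L := lamQ QB with hLdef
  -- lower bound
  have hlow : ∀ n, lamA (F n) * L ≤ lam (B * F n) := by
    intro n
    have hEm : MeasurableSet (toMeasurable lam (B * F n)) := measurableSet_toMeasurable _ _
    have h1 : lam (B * F n) = ∫⁻ q, c q (toMeasurable lam (B * F n)) ∂lamQ := by
      rw [← hWeil _ hEm, measure_toMeasurable]
    rw [h1]
    have h2 : ∀ q, QB.indicator (fun _ => lamA (F n)) q ≤
        c q (toMeasurable lam (B * F n)) := by
      intro q
      by_cases hq : q ∈ QB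
      · rw [Set.indicator_of_mem hq]
        obtain ⟨b, hbB, rfl⟩ := hq
        rw [hc b, Measure.map_apply (measurable_const_mul b) hEm]
        refine measure_mono ?_
        intro f hf
        exact subset_toMeasurable _ _ (Set.mul_mem_mul hbB hf)
      · rw [Set.indicator_of_notMem hq]; exact zero_le
    calc lamA (F n) * L = ∫⁻ q, QB.indicator (fun _ => lamA (F n)) q ∂lamQ := by
          rw [lintegral_indicator_const hQBm]
      _ ≤ _ := lintegral_mono h2
  -- upper bound
  have hAc0 : lamA ((A : Set G)ᶜ) = 0 :=
    hsupp _ hAclosed.measurableSet.compl (by simp)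
  have hupp : ∀ n, lam (B * F n) ≤ (1 + ENNReal.ofReal (ε n)) * lamA (F n) * L := by
    intro n
    set X : Set G := (B⁻¹ * B ∩ (A : Set G)) * F n with hXdef
    set Xt : Set G := toMeasurable lamA X with hXtdef
    have hXtm : MeasurableSet Xt := measurableSet_toMeasurable _ _
    have hXtle : lamA Xt ≤ (1 + ENNReal.ofReal (ε n)) * lamA (F n) := by
      rw [hXtdef, measure_toMeasurable]; exact hFolner n
    have hsat : closure ({1} : Set G) * Xt = Xt := aux_nsat hXtm
    have hwin : ∀ g b : G, g ∈ closure B → b ∈ B → g⁻¹ * b ∈ A → ∀ f ∈ F n,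
        g⁻¹ * (b * f) ∈ Xt := by
      intro g b hg hb hgb f hf
      have hgB : g ∈ B * closure ({1} : Set G) := by
        rw [hB.mul_closure_one_eq_closure]; exact hg
      obtain ⟨b₀, hb₀, nn, hnn, rfl⟩ := hgB
      have hnninv : nn⁻¹ ∈ closure ({1} : Set G) := by
        have h1 : nn⁻¹ ∈ (closure ({1} : Set G))⁻¹ := by simpa using hnn
        rw [inv_closure] at h1; simpa using h1
      have hnA : nn ∈ A := by
        have : closure ({1} : Set G) ⊆ (A : Set G) :=
          closure_minimal (by simp [A.one_mem]) hAclosed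
        exact this hnn
      have ht : b₀⁻¹ * b ∈ B⁻¹ * B ∩ (A : Set G) := by
        constructor
        · exact ⟨b₀⁻¹, Set.inv_mem_inv.2 hb₀, b, hb, rfl⟩
        · have heq : b₀⁻¹ * b = nn * ((b₀ * nn)⁻¹ * b) := by group
          rw [heq]
          exact A.mul_mem hnA hgb
      have heq2 : (b₀ * nn)⁻¹ * (b * f) = nn⁻¹ * ((b₀⁻¹ * b) * f) := by group
      rw [heq2]
      have hX : (b₀⁻¹ * b) * f ∈ X := Set.mul_mem_mul ht hf
      have hmem : nn⁻¹ * ((b₀⁻¹ * b) * f) ∈ closure ({1} : Set G) * Xt :=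
        ⟨nn⁻¹, hnninv, _, subset_toMeasurable _ _ hX, rfl⟩
      rwa [hsat] at hmem
    set En : Set G := (QuotientGroup.mk ⁻¹' QB) ∩
      ((fun x => (β (QuotientGroup.mk x))⁻¹ * x) ⁻¹' Xt) with hEndef
    have hEnm : MeasurableSet En := by
      refine (hQBm.preimage QuotientGroup.measurable_coe).inter ?_
      refine hXtm.preimage ?_
      exact ((hβm.comp QuotientGroup.measurable_coe).inv.mul measurable_id)
    have hTEn : B * F n ⊆ En := by
      rintro _ ⟨b, hb, f, hf, rfl⟩
      have hπbf : (QuotientGroup.mk (b * f) : G ⧸ A) = QuotientGroup.mk b :=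
        QuotientGroup.mk_mul_of_mem b (hFA n hf)
      have hq : (QuotientGroup.mk (b * f) : G ⧸ A) ∈ QB := by
        rw [hπbf]; exact ⟨b, hb, rfl⟩
      refine ⟨hq, ?_⟩
      obtain ⟨hβcl, hβfib⟩ := hβ _ hq
      have hmemA : (β (QuotientGroup.mk (b * f)))⁻¹ * b ∈ A := by
        apply QuotientGroup.eq.1
        rw [hβfib, hπbf]
      exact hwin _ b hβcl hb hmemA f hf
    have hfib : ∀ q, c q En ≤
        QB.indicator (fun _ => (1 + ENNReal.ofReal (ε n)) * lamA (F n)) q := by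
      intro q
      by_cases hq : q ∈ QB
      · rw [Set.indicator_of_mem hq]
        obtain ⟨hβcl, hβfib⟩ := hβ q hq
        have hcq : c q = Measure.map (fun x => β q * x) lamA := by
          conv_lhs => rw [← hβfib]
          exact hc (β q)
        rw [hcq, Measure.map_apply (measurable_const_mul _) hEnm]
        have hsub : (fun x => β q * x) ⁻¹' En ⊆ Xt ∪ (A : Set G)ᶜ := by
          intro y hy
          by_cases hyA : y ∈ (A : Set G)
          · left
            obtain ⟨hy1, hy2⟩ := hy
            have hπe : (QuotientGroup.mk (β q * y) : G ⧸ A) = q := by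
              rw [QuotientGroup.mk_mul_of_mem (β q) hyA, hβfib]
            have hy2' := hy2
            simp only [Set.mem_preimage] at hy2'
            rw [hπe] at hy2'
            simpa [mul_assoc] using hy2'
          · right; exact hyA
        calc lamA ((fun x => β q * x) ⁻¹' En) ≤ lamA (Xt ∪ (A : Set G)ᶜ) :=
              measure_mono hsub
          _ ≤ lamA Xt + lamA ((A : Set G)ᶜ) := measure_union_le _ _
          _ = lamA Xt := by rw [hAc0, add_zero]
          _ ≤ (1 + ENNReal.ofReal (ε n)) * lamA (F n) := hXtle
      · rw [Set.indicator_of_notMem hq]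
        obtain ⟨g, hgq⟩ := QuotientGroup.mk_surjective q
        rw [← hgq, hc g, Measure.map_apply (measurable_const_mul g) hEnm]
        have hsub : (fun x => g * x) ⁻¹' En ⊆ (A : Set G)ᶜ := by
          intro y hy hyA
          obtain ⟨hy1, -⟩ := hy
          have hπe : (QuotientGroup.mk (g * y) : G ⧸ A) = q := by
            rw [QuotientGroup.mk_mul_of_mem g hyA, hgq]
          simp only [Set.mem_preimage] at hy1
          rw [hπe] at hy1
          exact hq hy1
        exact le_trans (measure_mono hsub) (le_of_eq hAc0)
    calc lam (B * F n) ≤ lam En := measure_mono hTEn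
      _ = ∫⁻ q, c q En ∂lamQ := hWeil _ hEnm
      _ ≤ ∫⁻ q, QB.indicator (fun _ => (1 + ENNReal.ofReal (ε n)) * lamA (F n)) q ∂lamQ :=
          lintegral_mono hfib
      _ = (1 + ENNReal.ofReal (ε n)) * lamA (F n) * L := by
          rw [lintegral_indicator_const hQBm]
  -- final squeeze
  have ha0 : ∀ n, lamA (F n) ≠ 0 := fun n => (hF0 n).ne'
  have hat : ∀ n, lamA (F n) ≠ ⊤ := fun n => (hFfin n).ne
  have hlow' : ∀ n, L ≤ lam (B * F n) / lamA (F n) := by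
    intro n
    rw [ENNReal.le_div_iff_mul_le (Or.inl (ha0 n)) (Or.inl (hat n))]
    calc L * lamA (F n) = lamA (F n) * L := mul_comm _ _
      _ ≤ _ := hlow n
  have hupp' : ∀ n, lam (B * F n) / lamA (F n) ≤ (1 + ENNReal.ofReal (ε n)) * L := by
    intro n
    rw [ENNReal.div_le_iff_le_mul (Or.inl (ha0 n)) (Or.inl (hat n))]
    calc lam (B * F n) ≤ (1 + ENNReal.ofReal (ε n)) * lamA (F n) * L := hupp n
      _ = (1 + ENNReal.ofReal (ε n)) * L * lamA (F n) := by ring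
  have hlim : Tendsto (fun n => (1 + ENNReal.ofReal (ε n)) * L) atTop (nhds L) := by
    have h1 : Tendsto (fun n => ENNReal.ofReal (ε n)) atTop (nhds 0) := by
      have := ENNReal.tendsto_ofReal hε
      simpa using this
    have h2 : Tendsto (fun n => 1 + ENNReal.ofReal (ε n)) atTop (nhds 1) := by
      have := h1.const_add (1 : ℝ≥0∞)
      simpa using this
    have h3 : Tendsto (fun n => (1 + ENNReal.ofReal (ε n)) * L) atTop (nhds (1 * L)) :=
      ENNReal.Tendsto.mul_const h2 (Or.inl one_ne_zero)
    simpa using h3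
  exact tendsto_of_tendsto_of_tendsto_of_le_of_le tendsto_const_nhds hlim hlow' hupp'
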